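/- Let k ≥ 2, t ≥ 0 and n ≥ 2k(t+1). Then ex(n, (t+1)C_{2k}) ≥ C(n,2) − C(n−k(t+1)+1, 2) + 1, where ex(n,(t+1)C_{2k}) denotes the maximum number of edges in an n-vertex graph with no t+1 pairwise vertex-disjoint copies of C_{2k}. -/

import Mathlib

/-- The cycle on `n` vertices. -/
def cycGraph (n : ℕ) : SimpleGraph (ZMod n) :=
  SimpleGraph.fromRel (fun i j => i - j = 1)

/-- `DisjointCopies F G t` : `G` contains `t` pairwise vertex-disjoint copies of `F`. -/
def DisjointCopies {α β : Type*} (F : SimpleGraph α) (G : SimpleGraph β) (t : ℕ) : Prop :=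
  ∃ f : Fin t → (α ↪ β),
    (∀ i, ∀ a b, F.Adj a b → G.Adj (f i a) (f i b)) ∧
    ∀ i j, i ≠ j → ∀ a b, f i a ≠ f j b

/-- `exDisj F t n` : the maximum number of edges of an `n`-vertex graph containing no
`t + 1` pairwise vertex-disjoint copies of `F`. -/
noncomputable def exDisj {α : Type*} (F : SimpleGraph α) (t n : ℕ) : ℕ :=
  sSup {m | ∃ G : SimpleGraph (Fin n), ¬ DisjointCopies F G (t + 1) ∧ m = G.edgeSet.ncard}

lemma edgeSet_map_eq {α β : Type*} (f : α ↪ β) (G : SimpleGraph α) :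
    (G.map f).edgeSet = Sym2.map f '' G.edgeSet := by
  ext z
  induction z using Sym2.ind with
  | _ a b =>
    simp only [SimpleGraph.mem_edgeSet, SimpleGraph.map_adj, Set.mem_image]
    constructor
    · rintro ⟨u, v, h, rfl, rfl⟩
      exact ⟨s(u, v), h, Sym2.map_pair_eq f u v⟩
    · rintro ⟨z, hz, hzeq⟩
      revert hz hzeq
      refine Sym2.ind (fun u v hz hzeq => ?_) z
      rw [Sym2.map_pair_eq, Sym2.eq_iff] at hzeq
      rcases hzeq with ⟨rfl, rfl⟩ | ⟨rfl, rfl⟩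
      · exact ⟨u, v, hz, rfl, rfl⟩
      · exact ⟨v, u, hz.symm, rfl, rfl⟩

lemma ncard_edgeSet_top (s : ℕ) :
    (⊤ : SimpleGraph (Fin s)).edgeSet.ncard = s.choose 2 := by
  rw [← SimpleGraph.coe_edgeFinset, Set.ncard_coe_finset,
    SimpleGraph.card_edgeFinset_top_eq_card_choose_two, Fintype.card_fin]

theorem stmt_14 (k t n : ℕ) (hk : 2 ≤ k) (hn : 2 * k * (t + 1) ≤ n) :
    exDisj (cycGraph (2 * k)) t n ≥
      n.choose 2 - (n - k * (t + 1) + 1).choose 2 + 1 := by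
  classical
  set m : ℕ := k * (t + 1) - 1 with hm
  have hkt : 2 ≤ k * (t + 1) := le_trans hk (Nat.le_mul_of_pos_right k (by omega))
  have hn' : 2 * (k * (t + 1)) ≤ n := by rw [← mul_assoc]; exact hn
  have hm1 : m + 1 = k * (t + 1) := by omega
  have hmn : m + 1 < n := by omega
  haveI : NeZero (2 * k) := ⟨by omega⟩
  haveI : Fact (1 < 2 * k) := ⟨by omega⟩
  -- the extremal graph
  set G : SimpleGraph (Fin n) :=
    SimpleGraph.fromRel (fun i j => (i : ℕ) < m ∨ ((i : ℕ) = m ∧ (j : ℕ) = m + 1)) with hG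
  have hGadj : ∀ a b : Fin n, G.Adj a b ↔ a ≠ b ∧
      ((a : ℕ) < m ∨ ((a : ℕ) = m ∧ (b : ℕ) = m + 1) ∨
        (b : ℕ) < m ∨ ((b : ℕ) = m ∧ (a : ℕ) = m + 1)) := by
    intro a b
    rw [hG, SimpleGraph.fromRel_adj]
    tauto
  -- no t+1 disjoint copies
  have hno : ¬ DisjointCopies (cycGraph (2 * k)) G (t + 1) := by
    rintro ⟨f, hadj, hdisj⟩
    have hcyc : ∀ x : ZMod (2 * k), (cycGraph (2 * k)).Adj (x + 1) x := by
      intro x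
      rw [cycGraph, SimpleGraph.fromRel_adj]
      constructor
      · intro h
        have h1 : x + 1 = x + 0 := by rw [add_zero]; exact h
        exact one_ne_zero (add_left_cancel h1)
      · left; exact add_sub_cancel_left x 1
    have htwo : (2 : ZMod (2 * k)) ≠ 0 := by
      intro h
      rw [show ((2 : ZMod (2 * k)) = ((2 : ℕ) : ZMod (2 * k))) by push_cast; ring,
        ZMod.natCast_eq_zero_iff] at h
      have := Nat.le_of_dvd (by norm_num) h
      omega
    -- each copy uses at least k clique vertices
    have hcliq : ∀ g : ZMod (2 * k) ↪ Fin n, (∀ x, G.Adj (g (x + 1)) (g x)) →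
        k ≤ (Finset.univ.filter fun x : ZMod (2 * k) => ((g x : Fin n) : ℕ) < m).card := by
      intro g hadjg
      have htail : ∀ x : ZMod (2 * k), m ≤ (g (x + 1) : ℕ) → m ≤ (g x : ℕ) →
          ((g (x + 1) : ℕ) = m ∧ (g x : ℕ) = m + 1) ∨
            ((g (x + 1) : ℕ) = m + 1 ∧ (g x : ℕ) = m) := by
        intro x h1 h2
        have := (hGadj _ _).mp (hadjg x)
        omega
      set bad : Finset (ZMod (2 * k)) :=
        Finset.univ.filter (fun x => m ≤ (g x : ℕ) ∧ m ≤ (g (x + 1) : ℕ)) with hbad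
      have hval : ∀ x y : ZMod (2 * k), (g x : ℕ) = (g y : ℕ) → x = y := by
        intro x y h
        exact g.injective (Fin.val_injective h)
      have hnot2 : ∀ x y : ZMod (2 * k), x + 1 = y → y + 1 = x → False := by
        intro x y e1 e2
        apply htwo
        calc (2 : ZMod (2 * k)) = x + 2 - x := by ring
          _ = x - x := by rw [show x + 2 = x + 1 + 1 by ring, e1, e2]
          _ = 0 := by ring
      have hone : bad.card ≤ 1 := by
        rw [Finset.card_le_one]
        intro x hx y hy
        simp only [hbad, Finset.mem_filter, Finset.mem_univ, true_and] at hx hy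
        have Ax := htail x hx.2 hx.1
        have Ay := htail y hy.2 hy.1
        by_cases hxy : (g x : ℕ) = (g y : ℕ)
        · exact hval _ _ hxy
        · exfalso
          rcases Ax with ⟨a1, a2⟩ | ⟨a1, a2⟩ <;> rcases Ay with ⟨b1, b2⟩ | ⟨b1, b2⟩
          · exact hxy (by omega)
          · exact hnot2 x y (hval _ _ (by omega)) (hval _ _ (by omega))
          · exact hnot2 y x (hval _ _ (by omega)) (hval _ _ (by omega))
          · exact hxy (by omega)
      set s : ℕ := (Finset.univ.filter fun x : ZMod (2 * k) => m ≤ (g x : ℕ)).card with hs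
      have hsum1 : (∑ x : ZMod (2 * k), if m ≤ (g x : ℕ) then 1 else 0) = s := by
        rw [hs, Finset.card_filter]
      have hsum2 : (∑ x : ZMod (2 * k), if m ≤ (g (x + 1) : ℕ) then 1 else 0) = s := by
        rw [Fintype.sum_equiv (Equiv.addRight (1 : ZMod (2 * k)))
          (fun x => if m ≤ (g (x + 1) : ℕ) then 1 else 0)
          (fun x => if m ≤ (g x : ℕ) then 1 else 0) (fun x => rfl)]
        exact hsum1
      have hle : ∀ x : ZMod (2 * k),
          ((if m ≤ (g x : ℕ) then 1 else 0) + (if m ≤ (g (x + 1) : ℕ) then 1 else 0)) ≤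
            1 + (if x ∈ bad then 1 else 0) := by
        intro x
        by_cases h1 : m ≤ (g x : ℕ) <;> by_cases h2 : m ≤ (g (x + 1) : ℕ) <;>
          simp [hbad, h1, h2]
      have hcard : Fintype.card (ZMod (2 * k)) = 2 * k := ZMod.card (2 * k)
      have h2s : 2 * s ≤ 2 * k + 1 := by
        calc 2 * s = (∑ x : ZMod (2 * k), if m ≤ (g x : ℕ) then 1 else 0) +
              (∑ x : ZMod (2 * k), if m ≤ (g (x + 1) : ℕ) then 1 else 0) := by
              rw [hsum1, hsum2]; ring
          _ = ∑ x : ZMod (2 * k),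
              ((if m ≤ (g x : ℕ) then 1 else 0) + (if m ≤ (g (x + 1) : ℕ) then 1 else 0)) := by
              rw [Finset.sum_add_distrib]
          _ ≤ ∑ x : ZMod (2 * k), (1 + (if x ∈ bad then 1 else 0)) :=
              Finset.sum_le_sum (fun x _ => hle x)
          _ = 2 * k + bad.card := by
              rw [Finset.sum_add_distrib, Finset.sum_const, ← Finset.card_filter]
              simp [hcard]
          _ ≤ 2 * k + 1 := by omega
      have hsplit := Finset.card_filter_add_card_filter_not
        (s := (Finset.univ : Finset (ZMod (2 * k)))) (fun x => m ≤ (g x : ℕ))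
      rw [Finset.card_univ, hcard] at hsplit
      have hneg : (Finset.univ.filter fun x : ZMod (2 * k) => ¬ m ≤ (g x : ℕ)).card =
          (Finset.univ.filter fun x : ZMod (2 * k) => (g x : ℕ) < m).card := by
        congr 1
        ext x
        simp only [Finset.mem_filter, Finset.mem_univ, true_and, Nat.not_le]
      omega
    -- pigeonhole on the clique
    set Ci : Fin (t + 1) → Finset (Fin n) := fun i =>
      (Finset.univ.filter fun x : ZMod (2 * k) => ((f i x : Fin n) : ℕ) < m).image (f i) with hCi
    have hCk : ∀ i, k ≤ (Ci i).card := by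
      intro i
      rw [hCi]
      rw [Finset.card_image_of_injective _ (f i).injective]
      exact hcliq (f i) (fun x => hadj i _ _ (hcyc x))
    have hCsub : ∀ i, Ci i ⊆ Finset.Iio (⟨m, by omega⟩ : Fin n) := by
      intro i v hv
      simp only [hCi, Finset.mem_image, Finset.mem_filter] at hv
      obtain ⟨x, ⟨_, hx⟩, rfl⟩ := hv
      simp only [Finset.mem_Iio]
      exact hx
    have hdisjC : ∀ i ∈ (Finset.univ : Finset (Fin (t + 1))), ∀ j ∈ Finset.univ, i ≠ j →
        Disjoint (Ci i) (Ci j) := by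
      intro i _ j _ hij
      rw [Finset.disjoint_left]
      intro a hai haj
      simp only [hCi, Finset.mem_image, Finset.mem_filter] at hai haj
      obtain ⟨x, _, rfl⟩ := hai
      obtain ⟨y, _, hy⟩ := haj
      exact hdisj i j hij x y hy.symm
    have hbig : (Finset.univ.biUnion Ci).card ≤ m := by
      calc (Finset.univ.biUnion Ci).card ≤ (Finset.Iio (⟨m, by omega⟩ : Fin n)).card :=
            Finset.card_le_card (Finset.biUnion_subset.mpr (fun i _ => hCsub i))
        _ = m := Fin.card_Iio _
    rw [Finset.card_biUnion hdisjC] at hbig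
    have : (t + 1) * k ≤ ∑ i : Fin (t + 1), (Ci i).card := by
      calc (t + 1) * k = ∑ _i : Fin (t + 1), k := by simp [Finset.sum_const, mul_comm]
        _ ≤ _ := Finset.sum_le_sum (fun i _ => hCk i)
    have hmk : (t + 1) * k = m + 1 := by rw [hm1]; ring
    omega
  -- the edge count
  set vm : Fin n := ⟨m, by omega⟩ with hvm
  set vm1 : Fin n := ⟨m + 1, by omega⟩ with hvm1
  set sp : Sym2 (Fin n) := s(vm, vm1) with hsp
  set e : Fin (n - m) ↪ Fin n :=
    ⟨fun x => ⟨m + (x : ℕ), by omega⟩, by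
      intro a b hab
      have : m + (a : ℕ) = m + (b : ℕ) := congrArg Fin.val hab
      exact Fin.val_injective (by omega)⟩ with he
  have hKadj : ∀ a b : Fin n, (SimpleGraph.map e ⊤).Adj a b ↔ a ≠ b ∧ m ≤ (a : ℕ) ∧ m ≤ (b : ℕ) := by
    intro a b
    rw [SimpleGraph.map_adj]
    constructor
    · rintro ⟨u, v, huv, rfl, rfl⟩
      refine ⟨fun h => (SimpleGraph.top_adj _ _).mp huv (e.injective h), ?_, ?_⟩ <;>
        exact Nat.le_add_right _ _
    · rintro ⟨hab, ha, hb⟩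
      have han : (a : ℕ) < n := a.isLt
      have hbn : (b : ℕ) < n := b.isLt
      refine ⟨⟨(a : ℕ) - m, by omega⟩, ⟨(b : ℕ) - m, by omega⟩, ?_, ?_, ?_⟩
      · rw [SimpleGraph.top_adj]
        intro h
        apply hab
        have : (a : ℕ) - m = (b : ℕ) - m := congrArg Fin.val h
        exact Fin.val_injective (by omega)
      · exact Fin.val_injective (by show m + ((a : ℕ) - m) = (a : ℕ); omega)
      · exact Fin.val_injective (by show m + ((b : ℕ) - m) = (b : ℕ); omega)
  have hMedge : ((⊤ : SimpleGraph (Fin n)) \ G).edgeSet = (SimpleGraph.map e ⊤).edgeSet \ {sp} := by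
    ext z
    induction z using Sym2.ind with
    | _ a b =>
      simp only [Set.mem_diff, Set.mem_singleton_iff, SimpleGraph.mem_edgeSet,
        SimpleGraph.sdiff_adj, SimpleGraph.top_adj, hKadj, hGadj, hsp, Sym2.eq_iff]
      have hab : a = b ↔ (a : ℕ) = (b : ℕ) := ⟨fun h => by rw [h], fun h => Fin.val_injective h⟩
      have havm : a = vm ↔ (a : ℕ) = m := ⟨fun h => by rw [h], fun h => Fin.val_injective h⟩
      have hbvm : b = vm ↔ (b : ℕ) = m := ⟨fun h => by rw [h], fun h => Fin.val_injective h⟩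
      have havm1 : a = vm1 ↔ (a : ℕ) = m + 1 :=
        ⟨fun h => by rw [h], fun h => Fin.val_injective h⟩
      have hbvm1 : b = vm1 ↔ (b : ℕ) = m + 1 :=
        ⟨fun h => by rw [h], fun h => Fin.val_injective h⟩
      simp only [ne_eq, hab, havm, hbvm, havm1, hbvm1]
      omega
  have hspK : sp ∈ (SimpleGraph.map e ⊤).edgeSet := by
    rw [SimpleGraph.mem_edgeSet, hKadj]
    refine ⟨?_, by simp [hvm], by simp [hvm1]⟩
    intro h
    have := congrArg Fin.val h
    simp [hvm, hvm1] at this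
  have hKcard : (SimpleGraph.map e ⊤).edgeSet.ncard = (n - m).choose 2 := by
    rw [edgeSet_map_eq, Set.ncard_image_of_injective _ (Sym2.map.injective e.injective),
      ncard_edgeSet_top]
  have hMcard : ((⊤ : SimpleGraph (Fin n)) \ G).edgeSet.ncard = (n - m).choose 2 - 1 := by
    rw [hMedge, Set.ncard_diff_singleton_of_mem hspK, hKcard]
  have hGedge : G.edgeSet = (⊤ : SimpleGraph (Fin n)).edgeSet \ ((⊤ : SimpleGraph (Fin n)) \ G).edgeSet := by
    ext z
    induction z using Sym2.ind with
    | _ a b =>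
      simp only [Set.mem_diff, SimpleGraph.mem_edgeSet, SimpleGraph.sdiff_adj,
        SimpleGraph.top_adj]
      constructor
      · intro h
        exact ⟨h.ne, fun hc => hc.2 h⟩
      · rintro ⟨hne, h⟩
        by_contra hc
        exact h ⟨hne, hc⟩
  have hMsub : ((⊤ : SimpleGraph (Fin n)) \ G).edgeSet ⊆ (⊤ : SimpleGraph (Fin n)).edgeSet :=
    SimpleGraph.edgeSet_mono le_top
  have htop : (⊤ : SimpleGraph (Fin n)).edgeSet.ncard = n.choose 2 := ncard_edgeSet_top n
  have hGcard : G.edgeSet.ncard = n.choose 2 - ((n - m).choose 2 - 1) := by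
    rw [hGedge, Set.ncard_diff hMsub (Set.toFinite _), htop, hMcard]
  -- conclude
  have hchoose1 : 1 ≤ (n - m).choose 2 := by
    have : (2 : ℕ).choose 2 ≤ (n - m).choose 2 := Nat.choose_le_choose 2 (by omega)
    simpa using this
  have hchoose2 : (n - m).choose 2 ≤ n.choose 2 := Nat.choose_le_choose 2 (by omega)
  have hval : G.edgeSet.ncard = n.choose 2 - (n - k * (t + 1) + 1).choose 2 + 1 := by
    rw [hGcard, show n - k * (t + 1) + 1 = n - m by omega]
    omega
  have hbdd : BddAbove {m' | ∃ G : SimpleGraph (Fin n),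
      ¬ DisjointCopies (cycGraph (2 * k)) G (t + 1) ∧ m' = G.edgeSet.ncard} := by
    refine ⟨n.choose 2, ?_⟩
    rintro x ⟨H, _, rfl⟩
    rw [← SimpleGraph.coe_edgeFinset, Set.ncard_coe_finset]
    calc H.edgeFinset.card ≤ (Fintype.card (Fin n)).choose 2 :=
          SimpleGraph.card_edgeFinset_le_card_choose_two
      _ = n.choose 2 := by rw [Fintype.card_fin]
  exact le_csSup hbdd ⟨G, hno, hval.symm⟩
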